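/- Let f be homogeneous of degree n ≥ 1 in K{X}_N. If f is primitive with respect to Δ_a, then ⟨f, g₁ ⧢ g₂⟩ = 0 for all homogeneous g₁, g₂ of degree ≥ 1, where ⟨,⟩ is the canonical pairing making the tree monomials an orthonormal basis. Conversely, if f is orthogonal to all shuffle products S ⧢ T of tree monomials S of degree k and T of degree n−k with 1 ≤ k < (n+1)/2, then f is primitive. -/

import Mathlib

noncomputable section

/-- A planar reduced rooted tree with leaves labeled by `X` and all vertex arities
at most `N` (and at least 2): the tree monomials of the free `Mag_N`-algebra
(`N = ⊤` gives the operad `Mag_ω` of Stasheff polytopes, `N = 2` gives `Mag`). -/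
inductive PT (X : Type) (N : ℕ∞) : Type
  | leaf : X → PT X N
  | node : (k : ℕ) → 2 ≤ k → (k : ℕ∞) ≤ N → (Fin k → PT X N) → PT X N

namespace PT

variable {X : Type} {N : ℕ∞}

/-- Number of leaves. -/
def nLeaves : PT X N → ℕ
  | .leaf _ => 1
  | .node k _ _ f => ∑ i : Fin k, nLeaves (f i)

/-- The list of leaf labels, from left to right. -/
def leafList : PT X N → List X
  | .leaf x => [x]
  | .node k _ _ f => ((List.finRange k).map fun i => leafList (f i)).flatten

end PT

/-- The monomial basis of the free unitary `Mag_N`-algebra: tree monomials together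
with the empty tree `none` (the unit `1`). -/
abbrev OT (X : Type) (N : ℕ∞) := Option (PT X N)

/-- The free unitary `Mag_N`-algebra `K{X}_N` on the monomial basis `OT X N`;
via this basis it is identified with its graded dual. -/
abbrev FA (K X : Type) (N : ℕ∞) [Semiring K] := OT X N →₀ K

/-- Grafting of a list of monomials (with the coherent unit action): unit factors are
discarded, the empty grafting is the unit, grafting a single tree is that tree
(contraction of a unary vertex), and otherwise a new root is introduced. -/
def graftB {X : Type} {N : ℕ∞} (l : List (OT X N)) : OT X N :=
  match l.reduceOption with
  | [] => none
  | [t] => some t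
  | l' => if h : 2 ≤ l'.length ∧ (l'.length : ℕ∞) ≤ N then
      some (.node l'.length h.1 h.2 l'.get) else none

/-- Degree (leaf count) of a basis monomial; the unit has degree 0. -/
def degOT {X : Type} {N : ℕ∞} : OT X N → ℕ
  | none => 0
  | some t => t.nLeaves

/-- Multilinear extension helper: `tup [f₁,…,fₙ]` is the element `f₁ ⊗ ⋯ ⊗ fₙ` on the
basis of lists. -/
def tup {K : Type} [Semiring K] {α : Type} : List (α →₀ K) → (List α →₀ K)
  | [] => Finsupp.single [] 1
  | g :: r => g.sum fun s c => c • (tup r).mapDomain (List.cons s)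

/-- The `n`-ary grafting operation `∨ⁿ` of `K{X}_N`, as a multilinear map. -/
def G {K X : Type} {N : ℕ∞} [Semiring K] (l : List (FA K X N)) : FA K X N :=
  (tup l).mapDomain graftB

/-- Componentwise grafting on pairs of monomials. -/
def graftB2 {X : Type} {N : ℕ∞} (l : List (OT X N × OT X N)) : OT X N × OT X N :=
  (graftB (l.map Prod.fst), graftB (l.map Prod.snd))

/-- The `n`-ary grafting operation on `K{X}_N ⊗ K{X}_N` (componentwise product;
`single (s, t)` corresponds to `s ⊗ t`). -/
def G2 {K X : Type} {N : ℕ∞} [Semiring K] (l : List ((OT X N × OT X N) →₀ K)) :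
    (OT X N × OT X N) →₀ K :=
  (tup l).mapDomain graftB2

/-- `red T I`: restriction of the tree `T` to the leaf subset `I` (leaves are numbered
from `0` from the left): vertices and edges not on a path from a leaf in `I` to the
root are deleted and unary vertices are contracted; the unit if nothing survives. -/
def red {X : Type} {N : ℕ∞} : PT X N → Finset ℕ → OT X N
  | .leaf x, I => if 0 ∈ I then some (.leaf x) else none
  | .node k _ _ f, I =>
      graftB ((List.finRange k).map fun i =>
        let off : ℕ := ∑ j ∈ Finset.univ.filter (fun j : Fin k => j < i), (f j).nLeaves
        red (f i) (((I.filter fun m => off ≤ m ∧ m < off + (f i).nLeaves)).image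
          (· - off)))

/-- `f` is primitive: `Δ(f) = f ⊗ 1 + 1 ⊗ f`. -/
def IsPrim {K X : Type} {N : ℕ∞} [Semiring K]
    (Δ : FA K X N →ₗ[K] ((OT X N × OT X N) →₀ K)) (f : FA K X N) : Prop :=
  Δ f = f.mapDomain (fun a => (a, (none : OT X N))) +
    f.mapDomain (fun a => ((none : OT X N), a))

/-- `f` is homogeneous of degree `n` (each monomial in its support has `n` leaves). -/
def Homog {K X : Type} {N : ℕ∞} [Semiring K] (f : FA K X N) (n : ℕ) : Prop :=
  ∀ t ∈ f.support, degOT t = n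

/-- The canonical pairing on `K{X}_N` making the monomial basis orthonormal. -/
def pairF {K X : Type} {N : ℕ∞} [Semiring K] (f g : FA K X N) : K :=
  f.sum fun t c => c * g t

-- ===== helper lemmas =====
section Helpers
attribute [local instance] Classical.propDecidable
variable {K : Type} [Field K] {α : Type}

lemma mapDomain_apply' {β : Type} (h : α → β) (F : α →₀ K) (x : β) :
    F.mapDomain h x = F.sum fun a c => if h a = x then c else 0 := by
  rw [Finsupp.mapDomain, Finsupp.sum_apply]
  exact Finsupp.sum_congr fun a _ => Finsupp.single_apply

lemma mapDomain_cons_apply (s a : α) (m : List α) (F : List α →₀ K) :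
    F.mapDomain (List.cons s) (a :: m) = if s = a then F m else 0 := by
  split
  · subst a
    exact Finsupp.mapDomain_apply (fun x y h => by simpa using h) F m
  · apply Finsupp.mapDomain_notin_range
    rintro ⟨u, hu⟩
    simp only [List.cons.injEq] at hu
    exact ‹¬ s = a› hu.1

lemma tup_cons_apply (g : α →₀ K) (r : List (α →₀ K)) (a : α) (m : List α) :
    tup (g :: r) (a :: m) = g a * tup r m := by
  show (g.sum fun s c => c • (tup r).mapDomain (List.cons s)) (a :: m) = _
  rw [Finsupp.sum_apply]
  have : ∀ s c, (c • (tup r).mapDomain (List.cons s)) (a :: m)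
      = if s = a then c * tup r m else 0 := by
    intro s c
    rw [Finsupp.smul_apply, mapDomain_cons_apply, smul_eq_mul]
    split <;> simp
  rw [show (g.sum fun s c => (c • Finsupp.mapDomain (List.cons s) (tup r)) (a :: m))
      = g.sum fun s c => if s = a then c * tup r m else 0 from
    Finsupp.sum_congr fun s _ => this s (g s)]
  rw [Finsupp.sum_ite_eq' g a (fun _ c => c * tup r m)]
  split
  · rfl
  · rw [Finsupp.notMem_support_iff.mp ‹_›, zero_mul]

lemma tup_cons_nil (g : α →₀ K) (r : List (α →₀ K)) : tup (g :: r) [] = 0 := by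
  show (g.sum fun s c => c • (tup r).mapDomain (List.cons s)) [] = 0
  rw [Finsupp.sum_apply]
  apply Finset.sum_eq_zero
  intro s _
  show (g s • Finsupp.mapDomain (List.cons s) (tup r)) [] = 0
  rw [Finsupp.smul_apply, Finsupp.mapDomain_notin_range, smul_zero]
  rintro ⟨u, hu⟩
  simp at hu

lemma tup_nil_cons (a : α) (m : List α) : tup ([] : List (α →₀ K)) (a :: m) = 0 := by
  show Finsupp.single [] 1 (a :: m) = 0
  rw [Finsupp.single_apply]
  simp

lemma tup_nil_nil : tup ([] : List (α →₀ K)) [] = 1 := by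
  show Finsupp.single [] 1 [] = 1
  simp

lemma tup_single (l : List α) : tup (l.map fun a => Finsupp.single a (1 : K)) = Finsupp.single l 1 := by
  induction l with
  | nil => rfl
  | cons a r ih =>
      show (Finsupp.single a 1).sum (fun s c => c • (tup (r.map fun a => Finsupp.single a (1:K))).mapDomain (List.cons s)) = _
      rw [ih, Finsupp.sum_single_index (by simp), one_smul, Finsupp.mapDomain_single]

end Helpers

-- ===== graftB lemmas =====
section Graft
variable {X : Type} {N : ℕ∞}

lemma reduceOption_map_some (l : List (PT X N)) : (l.map some).reduceOption = l := by
  induction l with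
  | nil => rfl
  | cons a r ih => simp [ih]

lemma nLeaves_node_list (l : List (PT X N)) (h2 : 2 ≤ l.length) (hN : (l.length : ℕ∞) ≤ N) :
    (PT.node l.length h2 hN l.get).nLeaves = (l.map PT.nLeaves).sum := by
  show (∑ i : Fin l.length, (l.get i).nLeaves) = _
  rw [← List.sum_ofFn]
  congr 1
  rw [show (fun i => (l.get i).nLeaves) = PT.nLeaves ∘ l.get from rfl]
  rw [← List.map_ofFn, List.ofFn_get]

lemma graftB_eq_nil (l : List (OT X N)) (h : l.reduceOption = []) : graftB l = none := by
  unfold graftB; rw [h]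

lemma graftB_eq_one (l : List (OT X N)) (t : PT X N) (h : l.reduceOption = [t]) :
    graftB l = some t := by
  unfold graftB; rw [h]

lemma graftB_eq_cons (l : List (OT X N)) (a b : PT X N) (r : List (PT X N))
    (h : l.reduceOption = a :: b :: r) :
    graftB l = if hh : 2 ≤ (a :: b :: r).length ∧ ((a :: b :: r).length : ℕ∞) ≤ N then
      some (PT.node (a :: b :: r).length hh.1 hh.2 (a :: b :: r).get) else none := by
  unfold graftB; rw [h]

lemma graftB_map_some (l : List (PT X N)) (h2 : 2 ≤ l.length) (hN : (l.length : ℕ∞) ≤ N) :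
    graftB (l.map some) = some (PT.node l.length h2 hN l.get) := by
  rcases l with _ | ⟨a, _ | ⟨b, r⟩⟩
  · simp at h2
  · simp at h2
  · rw [graftB_eq_cons _ a b r (by rw [reduceOption_map_some])]
    rw [dif_pos ⟨h2, hN⟩]

lemma graftB_eq_none_iff (l : List (OT X N)) (hN : (l.length : ℕ∞) ≤ N) :
    graftB l = none ↔ l.reduceOption = [] := by
  rcases h : l.reduceOption with _ | ⟨a, _ | ⟨b, r⟩⟩
  · simp [graftB_eq_nil l h]
  · simp [graftB_eq_one l a h]
  · have hb : ((a :: b :: r).length : ℕ∞) ≤ N := by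
      calc ((a :: b :: r).length : ℕ∞) = (l.reduceOption.length : ℕ∞) := by rw [h]
        _ ≤ (l.length : ℕ∞) := by rw [Nat.cast_le]; exact List.reduceOption_length_le l
        _ ≤ N := hN
    rw [graftB_eq_cons l a b r h]
    rw [dif_pos (show 2 ≤ (a :: b :: r).length ∧ ((a :: b :: r).length : ℕ∞) ≤ N from ⟨by simp [Nat.succ_le_succ, Nat.le_add_left], hb⟩)]
    simp

lemma sum_degOT (l : List (OT X N)) :
    (l.map degOT).sum = (l.reduceOption.map PT.nLeaves).sum := by
  induction l with
  | nil => rfl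
  | cons a r ih => cases a <;> simp [degOT, ih]

lemma degOT_graftB (l : List (OT X N)) (hN : (l.length : ℕ∞) ≤ N) :
    degOT (graftB l) = (l.map degOT).sum := by
  rw [sum_degOT]
  rcases h : l.reduceOption with _ | ⟨a, _ | ⟨b, r⟩⟩
  · rw [graftB_eq_nil l h]; rfl
  · rw [graftB_eq_one l a h]; simp [degOT]
  · have hb : ((a :: b :: r).length : ℕ∞) ≤ N := by
      calc ((a :: b :: r).length : ℕ∞) = (l.reduceOption.length : ℕ∞) := by rw [h]
        _ ≤ (l.length : ℕ∞) := by rw [Nat.cast_le]; exact List.reduceOption_length_le l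
        _ ≤ N := hN
    rw [graftB_eq_cons l a b r h]
    rw [dif_pos (show 2 ≤ (a :: b :: r).length ∧ ((a :: b :: r).length : ℕ∞) ≤ N from ⟨by simp [Nat.succ_le_succ, Nat.le_add_left], hb⟩)]
    exact nLeaves_node_list (a :: b :: r) (by simp [Nat.succ_le_succ, Nat.le_add_left]) hb

lemma graftB_all_none (l : List (OT X N)) (h : ∀ x ∈ l, x = none) : graftB l = none := by
  apply graftB_eq_nil
  rw [List.eq_nil_iff_forall_not_mem]
  intro x hx
  simpa using h _ (List.reduceOption_mem_iff.mp hx)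

end Graft

section Good
variable {K X : Type} [Field K] {N : ℕ∞}
attribute [local instance] Classical.propDecidable

def GoodF (n : ℕ) (t : PT X N) (F : (OT X N × OT X N) →₀ K) : Prop :=
  (∀ q, F (none, q) = if q = some t then 1 else 0) ∧
  (∀ p, F (p, none) = if p = some t then 1 else 0) ∧
  (∀ p q, F (p, q) ≠ 0 → degOT p + degOT q = n) ∧
  (∀ p q, F (p, q) = F (q, p))

variable {DF : PT X N → ((OT X N × OT X N) →₀ K)}

lemma tup_forall (ts : List (PT X N)) (m : List (OT X N × OT X N))
    (h : tup (ts.map DF) m ≠ 0) : List.Forall₂ (fun s x => DF s x ≠ 0) ts m := by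
  induction ts generalizing m with
  | nil =>
      cases m with
      | nil => exact List.Forall₂.nil
      | cons a m => exact absurd (tup_nil_cons a m) h
  | cons s ts ih =>
      cases m with
      | nil => exact absurd (tup_cons_nil _ _) h
      | cons a m =>
          rw [List.map_cons, tup_cons_apply] at h
          rcases mul_ne_zero_iff.mp h with ⟨h1, h2⟩
          exact List.Forall₂.cons h1 (ih m h2)

lemma tup_unit_left (ts : List (PT X N))
    (hG : ∀ s ∈ ts, GoodF (K := K) s.nLeaves s (DF s)) :
    tup (ts.map DF) (ts.map fun s => ((none : OT X N), some s)) = 1 := by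
  induction ts with
  | nil => exact tup_nil_nil
  | cons s ts ih =>
      rw [List.map_cons, List.map_cons, tup_cons_apply,
        ih (fun s hs => hG s (List.mem_cons_of_mem _ hs)), mul_one,
        (hG s (List.mem_cons_self)).1, if_pos rfl]

lemma tup_unit_right (ts : List (PT X N))
    (hG : ∀ s ∈ ts, GoodF (K := K) s.nLeaves s (DF s)) :
    tup (ts.map DF) (ts.map fun s => (some s, (none : OT X N))) = 1 := by
  induction ts with
  | nil => exact tup_nil_nil
  | cons s ts ih =>
      rw [List.map_cons, List.map_cons, tup_cons_apply,
        ih (fun s hs => hG s (List.mem_cons_of_mem _ hs)), mul_one,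
        (hG s (List.mem_cons_self)).2.1, if_pos rfl]

lemma forall_left_none {ts : List (PT X N)} {m : List (OT X N × OT X N)}
    (hG : ∀ s ∈ ts, GoodF (K := K) s.nLeaves s (DF s))
    (h : List.Forall₂ (fun s x => DF s x ≠ 0) ts m)
    (hn : ∀ x ∈ m, x.1 = none) :
    m = ts.map fun s => ((none : OT X N), some s) := by
  induction h with
  | nil => rfl
  | @cons s x ts m hx hrest ih =>
      obtain ⟨x1, x2⟩ := x
      have h1 : x1 = none := hn _ (List.mem_cons_self)
      subst h1
      rw [(hG s (List.mem_cons_self)).1] at hx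
      have h2 : x2 = some s := by by_contra hc; rw [if_neg hc] at hx; exact hx rfl
      subst h2
      rw [List.map_cons, ← ih (fun s hs => hG s (List.mem_cons_of_mem _ hs))
        (fun x hx => hn x (List.mem_cons_of_mem _ hx))]

lemma forall_right_none {ts : List (PT X N)} {m : List (OT X N × OT X N)}
    (hG : ∀ s ∈ ts, GoodF (K := K) s.nLeaves s (DF s))
    (h : List.Forall₂ (fun s x => DF s x ≠ 0) ts m)
    (hn : ∀ x ∈ m, x.2 = none) :
    m = ts.map fun s => (some s, (none : OT X N)) := by
  induction h with
  | nil => rfl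
  | @cons s x ts m hx hrest ih =>
      obtain ⟨x1, x2⟩ := x
      have h2 : x2 = none := hn _ (List.mem_cons_self)
      subst h2
      rw [(hG s (List.mem_cons_self)).2.1] at hx
      have h1 : x1 = some s := by by_contra hc; rw [if_neg hc] at hx; exact hx rfl
      subst h1
      rw [List.map_cons, ← ih (fun s hs => hG s (List.mem_cons_of_mem _ hs))
        (fun x hx => hn x (List.mem_cons_of_mem _ hx))]

lemma tup_swap (ts : List (PT X N))
    (hG : ∀ s ∈ ts, GoodF (K := K) s.nLeaves s (DF s))
    (m : List (OT X N × OT X N)) :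
    tup (ts.map DF) (m.map Prod.swap) = tup (ts.map DF) m := by
  induction ts generalizing m with
  | nil =>
      cases m with
      | nil => rfl
      | cons a m => simp only [List.map_nil, List.map_cons, tup_nil_cons]
  | cons s ts ih =>
      cases m with
      | nil => rfl
      | cons a m =>
          rw [List.map_cons, List.map_cons, tup_cons_apply, tup_cons_apply,
            ih (fun s hs => hG s (List.mem_cons_of_mem _ hs)) m]
          congr 1
          have := (hG s (List.mem_cons_self)).2.2.2 a.2 a.1
          simpa [Prod.swap] using this

lemma forall_deg {ts : List (PT X N)} {m : List (OT X N × OT X N)}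
    (hG : ∀ s ∈ ts, GoodF (K := K) s.nLeaves s (DF s))
    (h : List.Forall₂ (fun s x => DF s x ≠ 0) ts m) :
    (m.map fun x => degOT x.1).sum + (m.map fun x => degOT x.2).sum
      = (ts.map PT.nLeaves).sum := by
  induction h with
  | nil => rfl
  | @cons s x ts m hx hrest ih =>
      have hd := (hG s (List.mem_cons_self)).2.2.1 x.1 x.2 (by rwa [Prod.mk.eta])
      have := ih (fun s hs => hG s (List.mem_cons_of_mem _ hs))
      simp only [List.map_cons, List.sum_cons]
      omega

end Good

section G2
variable {K X : Type} [Field K] {N : ℕ∞}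
attribute [local instance] Classical.propDecidable
variable {DF : PT X N → ((OT X N × OT X N) →₀ K)}

lemma reduceOption_nil_all_none {α : Type} {l : List (Option α)}
    (h : l.reduceOption = []) : ∀ x ∈ l, x = none := by
  intro x hx
  cases x with
  | none => rfl
  | some y =>
      exact absurd (h ▸ List.reduceOption_mem_iff.mpr hx) List.not_mem_nil

lemma G2_good (ts : List (PT X N)) (h2 : 2 ≤ ts.length) (hNl : (ts.length : ℕ∞) ≤ N)
    (hG : ∀ s ∈ ts, GoodF (K := K) s.nLeaves s (DF s)) (T₀ : PT X N)
    (hT : graftB (ts.map some) = some T₀) :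
    GoodF ((ts.map PT.nLeaves).sum) T₀ ((tup (ts.map DF)).mapDomain graftB2) := by
  set T := tup (ts.map DF) with hTdef
  have hlen : ∀ m, T m ≠ 0 → m.length = ts.length := fun m h =>
    (tup_forall ts m h).length_eq.symm
  -- key: if T m ≠ 0 and first components all graft to none, then m is the canonical list
  have keyL : ∀ m, T m ≠ 0 → ∀ q, graftB2 m = (none, q) →
      m = (ts.map fun s => ((none : OT X N), some s)) ∧ q = some T₀ := by
    intro m hm q hgq
    have hml : m.length = ts.length := hlen m hm
    have hfst : graftB (m.map Prod.fst) = none := congrArg Prod.fst hgq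
    have hred : (m.map Prod.fst).reduceOption = [] := by
      rw [← graftB_eq_none_iff _ (by rw [List.length_map, hml]; exact hNl)]
      exact hfst
    have hall : ∀ x ∈ m, x.1 = none := by
      intro x hx
      exact reduceOption_nil_all_none hred _ (List.mem_map_of_mem (f := Prod.fst) hx)
    have hm0 : m = ts.map fun s => ((none : OT X N), some s) :=
      forall_left_none hG (tup_forall ts m hm) hall
    refine ⟨hm0, ?_⟩
    have hsnd : graftB (m.map Prod.snd) = q := congrArg Prod.snd hgq
    rw [hm0, List.map_map] at hsnd
    rw [show (Prod.snd ∘ fun s => ((none : OT X N), some s)) = some from rfl] at hsnd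
    rw [hT] at hsnd
    exact hsnd.symm
  have keyR : ∀ m, T m ≠ 0 → ∀ p, graftB2 m = (p, none) →
      m = (ts.map fun s => (some s, (none : OT X N))) ∧ p = some T₀ := by
    intro m hm p hgq
    have hml : m.length = ts.length := hlen m hm
    have hsnd : graftB (m.map Prod.snd) = none := congrArg Prod.snd hgq
    have hred : (m.map Prod.snd).reduceOption = [] := by
      rw [← graftB_eq_none_iff _ (by rw [List.length_map, hml]; exact hNl)]
      exact hsnd
    have hall : ∀ x ∈ m, x.2 = none := by
      intro x hx
      exact reduceOption_nil_all_none hred _ (List.mem_map_of_mem (f := Prod.snd) hx)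
    have hm0 : m = ts.map fun s => (some s, (none : OT X N)) :=
      forall_right_none hG (tup_forall ts m hm) hall
    refine ⟨hm0, ?_⟩
    have hfst : graftB (m.map Prod.fst) = p := congrArg Prod.fst hgq
    rw [hm0, List.map_map] at hfst
    rw [show (Prod.fst ∘ fun s => (some s, (none : OT X N))) = some from rfl] at hfst
    rw [hT] at hfst
    exact hfst.symm
  have hg2L : graftB2 (ts.map fun s => ((none : OT X N), some s)) = (none, some T₀) := by
    unfold graftB2
    rw [List.map_map, List.map_map]
    rw [show (Prod.fst ∘ fun s : PT X N => ((none : OT X N), some s)) = fun _ => none from rfl]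
    rw [show (Prod.snd ∘ fun s : PT X N => ((none : OT X N), some s)) = some from rfl]
    rw [hT, graftB_all_none _ (by
      intro x hx; rcases List.mem_map.mp hx with ⟨s, _, rfl⟩; rfl)]
  have hg2R : graftB2 (ts.map fun s => (some s, (none : OT X N))) = (some T₀, none) := by
    unfold graftB2
    rw [List.map_map, List.map_map]
    rw [show (Prod.fst ∘ fun s : PT X N => (some s, (none : OT X N))) = some from rfl]
    rw [show (Prod.snd ∘ fun s : PT X N => (some s, (none : OT X N))) = fun _ => none from rfl]
    rw [hT, graftB_all_none _ (by
      intro x hx; rcases List.mem_map.mp hx with ⟨s, _, rfl⟩; rfl)]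
  have hTm0 : T (ts.map fun s => ((none : OT X N), some s)) = 1 := tup_unit_left ts hG
  have hTm1 : T (ts.map fun s => (some s, (none : OT X N))) = 1 := tup_unit_right ts hG
  refine ⟨?_, ?_, ?_, ?_⟩
  · -- left counit
    intro q
    rw [mapDomain_apply']
    by_cases hq : q = some T₀
    · subst hq
      rw [if_pos rfl]
      refine Finset.sum_eq_single_of_mem _ (Finsupp.mem_support_iff.mpr (by rw [hTm0]; exact one_ne_zero)) ?_ |>.trans ?_
      · intro b hb hbne
        have hnb : ¬ graftB2 b = (none, some T₀) := fun hgb =>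
          hbne ((keyL b (Finsupp.mem_support_iff.mp hb) _ hgb).1)
        simp only [hnb, if_false]
      · simp only [hg2L, if_pos, hTm0]
    · rw [if_neg hq]
      apply Finset.sum_eq_zero
      intro b hb
      have hnb : ¬ graftB2 b = (none, q) := fun hgb =>
        hq (keyL b (Finsupp.mem_support_iff.mp hb) _ hgb).2
      simp only [hnb, if_false]
  · -- right counit
    intro p
    rw [mapDomain_apply']
    by_cases hp : p = some T₀
    · subst hp
      rw [if_pos rfl]
      refine Finset.sum_eq_single_of_mem _ (Finsupp.mem_support_iff.mpr (by rw [hTm1]; exact one_ne_zero)) ?_ |>.trans ?_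
      · intro b hb hbne
        have hnb : ¬ graftB2 b = (some T₀, none) := fun hgb =>
          hbne ((keyR b (Finsupp.mem_support_iff.mp hb) _ hgb).1)
        simp only [hnb, if_false]
      · simp only [hg2R, if_pos, hTm1]
    · rw [if_neg hp]
      apply Finset.sum_eq_zero
      intro b hb
      have hnb : ¬ graftB2 b = (p, none) := fun hgb =>
        hp (keyR b (Finsupp.mem_support_iff.mp hb) _ hgb).2
      simp only [hnb, if_false]
  · -- degree
    intro p q h
    rw [mapDomain_apply'] at h
    obtain ⟨m, hm, hne⟩ := Finset.exists_ne_zero_of_sum_ne_zero h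
    have hmT : T m ≠ 0 := Finsupp.mem_support_iff.mp hm
    have hg : graftB2 m = (p, q) := by
      by_contra hc
      simp only [hc, if_false] at hne
      exact hne rfl
    have hml : m.length = ts.length := hlen m hmT
    have hp : p = graftB (m.map Prod.fst) := (congrArg Prod.fst hg).symm
    have hq : q = graftB (m.map Prod.snd) := (congrArg Prod.snd hg).symm
    rw [hp, hq,
      degOT_graftB _ (by rw [List.length_map, hml]; exact hNl),
      degOT_graftB _ (by rw [List.length_map, hml]; exact hNl),
      List.map_map, List.map_map]
    exact forall_deg hG (tup_forall ts m hmT)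
  · -- symmetry
    intro p q
    have hmds : Finsupp.mapDomain (List.map Prod.swap) T = T := by
      ext m
      rw [show m = List.map Prod.swap (List.map Prod.swap m) by
        rw [List.map_map]; simp]
      rw [Finsupp.mapDomain_apply (List.map_injective_iff.mpr Prod.swap_injective)]
      rw [List.map_map]; simp only [Prod.swap_swap_eq, List.map_id]
      exact tup_swap ts hG _
    have hcomm : (graftB2 (X := X) (N := N)) ∘ List.map Prod.swap = Prod.swap ∘ graftB2 := by
      funext m
      show graftB2 (m.map Prod.swap) = (graftB2 m).swap
      unfold graftB2
      rw [List.map_map, List.map_map]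
      rfl
    have : Finsupp.mapDomain graftB2 T = Finsupp.mapDomain Prod.swap (Finsupp.mapDomain graftB2 T) := by
      conv_lhs => rw [← hmds, ← Finsupp.mapDomain_comp, hcomm, Finsupp.mapDomain_comp]
    conv_lhs => rw [this]
    rw [show ((p, q) : OT X N × OT X N) = Prod.swap (q, p) from rfl]
    rw [Finsupp.mapDomain_apply Prod.swap_injective]

end G2

section Main
variable {K X : Type} [Field K] {N : ℕ∞}
attribute [local instance] Classical.propDecidable

lemma node_congr {k k' : ℕ} (h : k = k') (h2 : 2 ≤ k) (hN1 : (k : ℕ∞) ≤ N)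
    (h2' : 2 ≤ k') (hN2 : (k' : ℕ∞) ≤ N) (f : Fin k → PT X N) (f' : Fin k' → PT X N)
    (hf : ∀ i : Fin k', f (Fin.cast h.symm i) = f' i) :
    PT.node k h2 hN1 f = PT.node k' h2' hN2 f' := by
  subst h
  have : f = f' := funext fun i => by simpa using hf i
  subst this
  rfl

lemma main_good (Δ : FA K X N →ₗ[K] ((OT X N × OT X N) →₀ K))
    (hΔx : ∀ x : X, Δ (Finsupp.single (some (PT.leaf x)) 1) =
      Finsupp.single ((some (PT.leaf x) : OT X N), (none : OT X N)) 1 +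
        Finsupp.single ((none : OT X N), (some (PT.leaf x) : OT X N)) 1)
    (hΔm : ∀ l : List (FA K X N), 2 ≤ l.length → (l.length : ℕ∞) ≤ N →
      Δ (G l) = G2 (l.map (Δ ·)))
    (t : PT X N) : GoodF t.nLeaves t (Δ (Finsupp.single (some t) 1)) := by
  induction t with
  | leaf x =>
      rw [hΔx]
      refine ⟨?_, ?_, ?_, ?_⟩
      · intro q
        cases q <;> simp [Finsupp.single_apply, PT.nLeaves, eq_comm]
      · intro p
        cases p <;> simp [Finsupp.single_apply, PT.nLeaves, eq_comm]
      · intro p q h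
        cases p <;> cases q <;> simp_all [Finsupp.single_apply, degOT] <;>
          (cases h; rfl)
      · intro p q
        cases p <;> cases q <;> simp [Finsupp.single_apply, add_comm]
  | node k hk hkN c ih =>
      obtain ⟨ts, hts⟩ : ∃ ts : List (PT X N), ts = (List.finRange k).map c := ⟨_, rfl⟩
      have htsl : ts.length = k := by rw [hts]; simp
      have hmem : ∀ s ∈ ts, GoodF (K := K) s.nLeaves s (Δ (Finsupp.single (some s) 1)) := by
        intro s hs
        rw [hts] at hs
        rcases List.mem_map.mp hs with ⟨i, _, rfl⟩
        exact ih i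
      have h2' : 2 ≤ ts.length := htsl ▸ hk
      have hN' : (ts.length : ℕ∞) ≤ N := by rw [htsl]; exact hkN
      have hT : graftB (ts.map some) = some (PT.node k hk hkN c) := by
        rw [graftB_map_some ts h2' hN']
        congr 1
        refine node_congr htsl h2' hN' hk hkN ts.get c ?_
        intro i
        subst hts
        simp
      have hmap2 : ((ts.map some).map fun a => (Finsupp.single a 1 : FA K X N))
          = ts.map fun s => Finsupp.single (some s) 1 := by
        rw [List.map_map]
        rfl
      have hsingle : (Finsupp.single (some (PT.node k hk hkN c)) 1 : FA K X N)
          = G (ts.map fun s => Finsupp.single (some s) 1) := by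
        unfold G
        rw [← hmap2, tup_single, Finsupp.mapDomain_single, hT]
      have hnl : (PT.node k hk hkN c).nLeaves = (ts.map PT.nLeaves).sum := by
        show (∑ i : Fin k, (c i).nLeaves) = _
        rw [← List.sum_ofFn]
        congr 1
        rw [show (fun i => (c i).nLeaves) = PT.nLeaves ∘ c from rfl, ← List.map_ofFn,
          List.ofFn_eq_map, hts]
      rw [hsingle, hΔm _ (by rw [List.length_map]; exact h2') (by rw [List.length_map]; exact hN')]
      rw [List.map_map]
      rw [hnl]
      exact G2_good ts h2' hN' hmem _ hT

end Main

section Final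
variable {K X : Type} [Field K] {N : ℕ∞}
attribute [local instance] Classical.propDecidable

lemma sum_eval {β : Type} (F : β →₀ K) (z : β) [D : ∀ x : β, Decidable (x = z)] :
    (F.sum fun x v => if x = z then v else 0) = F z := by
  by_cases hz : z ∈ F.support
  · rw [Finsupp.sum, Finset.sum_eq_single_of_mem z hz ?_, if_pos rfl]
    intro b _ hb
    rw [if_neg hb]
  · rw [Finsupp.sum, Finset.sum_eq_zero, (Finsupp.notMem_support_iff.mp hz)]
    intro b hb
    rw [if_neg]
    intro h
    subst h
    exact hz hb

lemma Delta_apply (Δ : FA K X N →ₗ[K] ((OT X N × OT X N) →₀ K)) (f : FA K X N)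
    (z : OT X N × OT X N) :
    Δ f z = f.sum fun t c => c * (Δ (Finsupp.single t 1)) z := by
  conv_lhs => rw [← Finsupp.sum_single f]
  rw [map_finsuppSum, Finsupp.sum_apply]
  apply Finsupp.sum_congr
  intro t _
  rw [show Finsupp.single t (f t) = f t • (Finsupp.single t 1 : FA K X N) by
    rw [Finsupp.smul_single', mul_one]]
  rw [map_smul, Finsupp.smul_apply, smul_eq_mul]

lemma phi_expand (Δ : FA K X N →ₗ[K] ((OT X N × OT X N) →₀ K)) (f : FA K X N)
    (w : OT X N × OT X N → K) :
    (f.sum fun t c => c * ((Δ (Finsupp.single t 1)).sum fun p d => d * w p))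
      = (Δ f).sum fun p d => d * w p := by
  set Φ : ((OT X N × OT X N) →₀ K) →ₗ[K] K :=
    Finsupp.lsum ℕ (fun p => LinearMap.smulRight (LinearMap.id : K →ₗ[K] K) (w p)) with hΦ
  have hΦap : ∀ F : (OT X N × OT X N) →₀ K, Φ F = F.sum fun p d => d * w p := by
    intro F
    rw [hΦ, Finsupp.lsum_apply]
    apply Finsupp.sum_congr
    intro p _
    rw [LinearMap.smulRight_apply, LinearMap.id_apply, smul_eq_mul]
  rw [← hΦap]
  conv_rhs => rw [← Finsupp.sum_single f]
  rw [show Φ (Δ (f.sum fun t c => Finsupp.single t c)) = (Φ.comp Δ) (f.sum fun t c => Finsupp.single t c) from rfl]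
  rw [map_finsuppSum]
  apply Finsupp.sum_congr
  intro t _
  rw [show Finsupp.single t (f t) = f t • (Finsupp.single t 1 : FA K X N) by
    rw [Finsupp.smul_single', mul_one]]
  rw [map_smul, smul_eq_mul, LinearMap.comp_apply, hΦap]

lemma phi_mapDomain {β γ : Type} (h : β → γ) (f : β →₀ K) (w : γ → K) :
    (Finsupp.mapDomain h f).sum (fun p d => d * w p) = f.sum fun t c => c * w (h t) :=
  Finsupp.sum_mapDomain_index (by simp) (by intros; rw [add_mul])

end Final

/-- Let `f` be homogeneous of degree `n ≥ 1` in the free unitary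
`Mag_N`-algebra `K{X}_N` (`2 ≤ N ≤ ω`). If `f` is primitive for `Δ_a` then
`⟨f, g₁ ⧢ g₂⟩ = 0` for all homogeneous `g₁, g₂` of degree `≥ 1` (the pairing `⟨,⟩`
making tree monomials orthonormal); conversely if `f` is orthogonal to all shuffle
products `S ⧢ T` of tree monomials with `deg S = k`, `deg T = n - k`,
`1 ≤ k < (n+1)/2`, then `f` is primitive. -/
theorem stmt14 (K X : Type) [Field K] [CharZero K] (N : ℕ∞) (hN : 2 ≤ N)
    (Δ : FA K X N →ₗ[K] ((OT X N × OT X N) →₀ K))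
    (hΔ1 : Δ (Finsupp.single (none : OT X N) 1) =
      Finsupp.single ((none : OT X N), (none : OT X N)) 1)
    (hΔx : ∀ x : X, Δ (Finsupp.single (some (PT.leaf x)) 1) =
      Finsupp.single ((some (PT.leaf x) : OT X N), (none : OT X N)) 1 +
        Finsupp.single ((none : OT X N), (some (PT.leaf x) : OT X N)) 1)
    (hΔm : ∀ l : List (FA K X N), 2 ≤ l.length → (l.length : ℕ∞) ≤ N →
      Δ (G l) = G2 (l.map (Δ ·)))
    (sh : FA K X N → FA K X N → FA K X N)
    (hsh : ∀ (f g : FA K X N) (t : OT X N),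
      sh f g t = (Δ (Finsupp.single t 1)).sum fun p c => c * (f p.1 * g p.2))
    (f : FA K X N) (n : ℕ) (hn : 1 ≤ n) (hf : Homog f n) :
    (IsPrim Δ f →
      ∀ (g₁ g₂ : FA K X N) (m₁ m₂ : ℕ), 1 ≤ m₁ → 1 ≤ m₂ →
        Homog g₁ m₁ → Homog g₂ m₂ → pairF f (sh g₁ g₂) = 0) ∧
    ((∀ S T : PT X N, 2 * S.nLeaves < n + 1 → S.nLeaves + T.nLeaves = n →
        pairF f (sh (Finsupp.single (some S : OT X N) 1)
          (Finsupp.single (some T : OT X N) 1)) = 0) →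
      IsPrim Δ f) := by
  classical
  have hgood : ∀ t : PT X N, GoodF t.nLeaves t (Δ (Finsupp.single (some t) 1)) :=
    main_good Δ hΔx hΔm
  have hnone_zero : ∀ (g : FA K X N) (m : ℕ), 1 ≤ m → Homog g m → g none = 0 := by
    intro g m hm hg
    by_contra hc
    have := hg none (Finsupp.mem_support_iff.mpr hc)
    simp only [degOT] at this
    omega
  have hfnone : f none = 0 := hnone_zero f n hn hf
  constructor
  · -- primitive → orthogonal to shuffles
    intro hprim g₁ g₂ m₁ m₂ hm₁ hm₂ hg₁ hg₂
    have hz1 : g₁ none = 0 := hnone_zero g₁ m₁ hm₁ hg₁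
    have hz2 : g₂ none = 0 := hnone_zero g₂ m₂ hm₂ hg₂
    have h1 : pairF f (sh g₁ g₂)
        = f.sum fun t c => c * ((Δ (Finsupp.single t 1)).sum fun p d =>
            d * (g₁ p.1 * g₂ p.2)) := by
      unfold pairF
      apply Finsupp.sum_congr
      intro t _
      rw [hsh]
    rw [h1, phi_expand Δ f (fun p => g₁ p.1 * g₂ p.2), hprim]
    rw [Finsupp.sum_add_index' (by simp) (by intros; rw [add_mul])]
    rw [phi_mapDomain (fun a => (a, (none : OT X N))) f (fun p => g₁ p.1 * g₂ p.2),
      phi_mapDomain (fun a => ((none : OT X N), a)) f (fun p => g₁ p.1 * g₂ p.2)]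
    simp [hz1, hz2]
  · -- orthogonality → primitive
    intro horth
    have hDf : ∀ z, Δ f z = f.sum fun t c => c * (Δ (Finsupp.single t 1)) z :=
      Delta_apply Δ f
    have hsupp : ∀ t ∈ f.support, ∃ t' : PT X N, t = some t' ∧ t'.nLeaves = n := by
      intro t ht
      cases t with
      | none =>
          have := hf none ht
          simp only [degOT] at this
          omega
      | some t' => exact ⟨t', rfl, hf _ ht⟩
    have hsymm : ∀ p q, Δ f (p, q) = Δ f (q, p) := by
      intro p q
      rw [hDf, hDf]
      apply Finsupp.sum_congr
      intro t ht
      obtain ⟨t', rfl, -⟩ := hsupp t ht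
      rw [(hgood t').2.2.2 p q]
    have hhyp : ∀ S T : PT X N, 2 * S.nLeaves < n + 1 → S.nLeaves + T.nLeaves = n →
        Δ f (some S, some T) = 0 := by
      intro S T h1 h2
      have hval := horth S T h1 h2
      have hps : pairF f (sh (Finsupp.single (some S : OT X N) 1)
          (Finsupp.single (some T : OT X N) 1)) = Δ f (some S, some T) := by
        unfold pairF
        rw [hDf]
        apply Finsupp.sum_congr
        intro t _
        congr 1
        rw [hsh]
        have heq : (fun (p : OT X N × OT X N) (c : K) =>
            c * ((Finsupp.single (some S : OT X N) (1 : K)) p.1 *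
              (Finsupp.single (some T : OT X N) (1 : K)) p.2))
            = fun p c => if p = ((some S : OT X N), (some T : OT X N)) then c else 0 := by
          funext p c
          rcases p with ⟨a, b⟩
          rw [Finsupp.single_apply, Finsupp.single_apply]
          by_cases ha : a = some S <;> by_cases hb : b = some T <;>
            simp [ha, hb, Prod.ext_iff, eq_comm]
        rw [heq]
        exact sum_eval _ _
      rw [← hps]
      exact hval
    have hdeg : ∀ p q, degOT p + degOT q ≠ n → Δ f (p, q) = 0 := by
      intro p q hne
      rw [hDf]
      apply Finset.sum_eq_zero
      intro t ht
      obtain ⟨t', rfl, hnl⟩ := hsupp t ht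
      have hz : (Δ (Finsupp.single (some t' : OT X N) 1)) (p, q) = 0 := by
        by_contra hc
        exact hne (by rw [(hgood t').2.2.1 p q hc, hnl])
      show f (some t') * (Δ (Finsupp.single (some t' : OT X N) 1)) (p, q) = 0
      rw [hz, mul_zero]
    have hsome : ∀ S T : PT X N, Δ f (some S, some T) = 0 := by
      intro S T
      by_cases hd : S.nLeaves + T.nLeaves = n
      · by_cases hk : 2 * S.nLeaves < n + 1
        · exact hhyp S T hk hd
        · rw [hsymm]
          exact hhyp T S (by omega) (by omega)
      · exact hdeg _ _ (by simpa [degOT] using hd)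
    have hleft : ∀ q, Δ f (none, q) = f q := by
      intro q
      rw [hDf]
      rw [show (f.sum fun t c => c * (Δ (Finsupp.single t 1)) ((none : OT X N), q))
          = f.sum fun t c => if t = q then c else 0 from Finsupp.sum_congr ?_]
      · exact sum_eval f q
      · intro t ht
        obtain ⟨t', rfl, -⟩ := hsupp t ht
        rw [(hgood t').1 q]
        by_cases hq : q = some t' <;> simp [hq, eq_comm]
    have hright : ∀ p, Δ f (p, none) = f p := by
      intro p
      rw [hDf]
      rw [show (f.sum fun t c => c * (Δ (Finsupp.single t 1)) (p, (none : OT X N)))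
          = f.sum fun t c => if t = p then c else 0 from Finsupp.sum_congr ?_]
      · exact sum_eval f p
      · intro t ht
        obtain ⟨t', rfl, -⟩ := hsupp t ht
        rw [(hgood t').2.1 p]
        by_cases hp : p = some t' <;> simp [hp, eq_comm]
    unfold IsPrim
    ext z
    obtain ⟨p, q⟩ := z
    rw [Finsupp.add_apply]
    have hA : (f.mapDomain fun a => (a, (none : OT X N))) (p, q)
        = if q = none then f p else 0 := by
      by_cases hq : q = none
      · subst hq
        rw [if_pos rfl]
        exact Finsupp.mapDomain_apply (fun a b h => congrArg Prod.fst h) f p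
      · rw [if_neg hq]
        apply Finsupp.mapDomain_notin_range
        rintro ⟨u, hu⟩
        exact hq (congrArg Prod.snd hu).symm
    have hB : (f.mapDomain fun a => ((none : OT X N), a)) (p, q)
        = if p = none then f q else 0 := by
      by_cases hp : p = none
      · subst hp
        rw [if_pos rfl]
        exact Finsupp.mapDomain_apply (fun a b h => congrArg Prod.snd h) f q
      · rw [if_neg hp]
        apply Finsupp.mapDomain_notin_range
        rintro ⟨u, hu⟩
        exact hp (congrArg Prod.fst hu).symm
    rw [hA, hB]
    cases p with
    | none =>
        cases q with
        | none => rw [hleft, hfnone]; simp [hfnone]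
        | some q' => rw [hleft]; simp
    | some p' =>
        cases q with
        | none => rw [hright]; simp
        | some q' => rw [hsome]; simp

end
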